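/- Suppose g and h are conjugates of s_1 = bwb in G = ℤ/2 * ℤ/3 satisfying l(gh) < max(l(g), l(h)), and assume at least one of g, h is long. Then l(g) ≠ l(h). If l(g) < l(h), then g' := ghg⁻¹ and h' := g are conjugates of s_1 satisfying g'h' = gh and l(g') + l(h') < l(g) + l(h). If instead l(h) < l(g), then the same conclusions hold for g' := h and h' := h⁻¹gh. -/

import Mathlib

/-- `G = ℤ/2 * ℤ/3`, the free product of cyclic groups of orders 2 and 3
(isomorphic to `PSL(2,ℤ)`). -/
abbrev G23 := Monoid.Coprod (Multiplicative (ZMod 2)) (Multiplicative (ZMod 3))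

/-- The generator `w` of the `ℤ/2` factor. -/
def w : G23 := Monoid.Coprod.inl (Multiplicative.ofAdd (1 : ZMod 2))

/-- The generator `b` of the `ℤ/3` factor. -/
def b : G23 := Monoid.Coprod.inr (Multiplicative.ofAdd (1 : ZMod 3))

/-- `s₀ = wb²`. -/
def s0 : G23 := w * b ^ 2

/-- `s₁ = bwb`. -/
def s1 : G23 := b * w * b

/-- `s₂ = b²w`. -/
def s2 : G23 := b ^ 2 * w

/-- The letters `w`, `b`, `b²` from which reduced expressions are built. -/
inductive Letter : Type
  | w : Letter
  | b : Letter
  | b2 : Letter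
deriving DecidableEq

/-- Evaluation of a letter in `G23`. -/
def Letter.eval : Letter → G23
  | Letter.w => _root_.w
  | Letter.b => _root_.b
  | Letter.b2 => _root_.b ^ 2

/-- The formal inverse of a letter (`w⁻¹ = w`, `b⁻¹ = b²`, `(b²)⁻¹ = b`). -/
def Letter.inv : Letter → Letter
  | Letter.w => Letter.w
  | Letter.b => Letter.b2
  | Letter.b2 => Letter.b

/-- Evaluation of a word in the letters `w`, `b`, `b²`. -/
def wordEval (L : List Letter) : G23 := (L.map Letter.eval).prod

/-- A word is reduced if no two consecutive letters are both equal to `w` or both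
powers of `b`; i.e. the letters alternate between `w` and powers of `b`. -/
def Reduced (L : List Letter) : Prop :=
  List.Chain' (fun x y => x = Letter.w ↔ ¬ y = Letter.w) L

/-- The length `l(a)` of an element of `G23`: the number of letters in its reduced
expression (`l(1) = 0`). -/
noncomputable def len (g : G23) : ℕ :=
  sInf {n : ℕ | ∃ L : List Letter, Reduced L ∧ wordEval L = g ∧ L.length = n}

/-- The short conjugates of `s₁`. -/
def shortSet : Set G23 := {s0, s1, s2}

-- group relations
lemma w_mul_w : w * w = 1 := by
  have h : (Multiplicative.ofAdd (1 : ZMod 2)) * (Multiplicative.ofAdd (1 : ZMod 2)) = 1 := by decide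
  rw [w, ← map_mul, h, map_one]
lemma b_mul_b_mul_b : b * b * b = 1 := by
  have h : (Multiplicative.ofAdd (1 : ZMod 3)) * (Multiplicative.ofAdd (1 : ZMod 3)) * (Multiplicative.ofAdd (1 : ZMod 3)) = 1 := by decide
  rw [b, ← map_mul, ← map_mul, h, map_one]
lemma b_mul_b2 : b * b ^ 2 = 1 := by
  rw [pow_two, ← mul_assoc, b_mul_b_mul_b]
lemma b2_mul_b : b ^ 2 * b = 1 := by
  rw [pow_two, mul_assoc, ← mul_assoc, b_mul_b_mul_b]
lemma b2_mul_b2 : b ^ 2 * b ^ 2 = b := by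
  have : b ^ 2 * b ^ 2 = b * (b ^2 * b) := by rw [pow_two]; group
  rw [this, b2_mul_b, mul_one]
lemma b_mul_b : b * b = b ^ 2 := (pow_two b).symm

-- eval with tail versions for simp
lemma wordEval_nil : wordEval [] = 1 := rfl
lemma wordEval_cons (t : Letter) (L : List Letter) :
    wordEval (t :: L) = t.eval * wordEval L := by
  simp [wordEval]
lemma wordEval_append (L M : List Letter) :
    wordEval (L ++ M) = wordEval L * wordEval M := by
  simp [wordEval]

/-- prepend a letter to a word, with reduction at the junction -/
def rcons (t : Letter) (L : List Letter) : List Letter :=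
  match L with
  | [] => [t]
  | s :: L' =>
    match t, s with
    | Letter.w, Letter.w => L'
    | Letter.w, Letter.b => Letter.w :: Letter.b :: L'
    | Letter.w, Letter.b2 => Letter.w :: Letter.b2 :: L'
    | Letter.b, Letter.w => Letter.b :: Letter.w :: L'
    | Letter.b, Letter.b => Letter.b2 :: L'
    | Letter.b, Letter.b2 => L'
    | Letter.b2, Letter.w => Letter.b2 :: Letter.w :: L'
    | Letter.b2, Letter.b => L'
    | Letter.b2, Letter.b2 => Letter.b :: L'

lemma eval_rcons (t : Letter) (L : List Letter) :
    wordEval (rcons t L) = t.eval * wordEval L := by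
  cases t <;> rcases L with _ | ⟨s, L⟩ <;> try rfl
  all_goals cases s <;>
    simp [rcons, wordEval_cons, Letter.eval, ← mul_assoc,
      w_mul_w, b_mul_b2, b2_mul_b, b2_mul_b2, b_mul_b]

lemma reduced_cons_iff (t s : Letter) (L : List Letter) :
    Reduced (t :: s :: L) ↔ ((t = Letter.w ↔ ¬ s = Letter.w) ∧ Reduced (s :: L)) := by
  simp [Reduced, List.Chain', List.isChain_cons_cons]

lemma reduced_tail {t : Letter} {L : List Letter} (h : Reduced (t :: L)) : Reduced L :=
  (List.isChain_cons.mp h).2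

lemma reduced_singleton (t : Letter) : Reduced [t] := by simp [Reduced, List.Chain']

lemma reduced_rcons {t : Letter} {L : List Letter} (h : Reduced L) :
    Reduced (rcons t L) := by
  cases t <;> rcases L with _ | ⟨s, L⟩ <;> try exact reduced_singleton _
  all_goals cases s
  case w.cons.w => exact reduced_tail h
  case b.cons.b2 => exact reduced_tail h
  case b2.cons.b => exact reduced_tail h
  case w.cons.b => exact (reduced_cons_iff _ _ _).mpr ⟨by simp, h⟩
  case w.cons.b2 => exact (reduced_cons_iff _ _ _).mpr ⟨by simp, h⟩
  case b.cons.w => exact (reduced_cons_iff _ _ _).mpr ⟨by simp, h⟩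
  case b2.cons.w => exact (reduced_cons_iff _ _ _).mpr ⟨by simp, h⟩
  all_goals
    rcases L with _ | ⟨u, L⟩
    · exact reduced_singleton _
    · rw [reduced_cons_iff] at h
      show Reduced (_ :: u :: L)
      rw [reduced_cons_iff]
      refine ⟨?_, h.2⟩
      have := h.1
      cases u <;> revert this <;> decide

lemma rcons_eq_cons {t : Letter} {L : List Letter} (h : Reduced (t :: L)) :
    rcons t L = t :: L := by
  rcases L with _ | ⟨s, L⟩
  · rfl
  · have h1 := (reduced_cons_iff _ _ _).mp h |>.1
    cases t <;> cases s <;> first | rfl | (exact absurd h1 (by decide))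

lemma rcons_w_w {L : List Letter} (h : Reduced L) :
    rcons Letter.w (rcons Letter.w L) = L := by
  rcases L with _ | ⟨s, L⟩
  · rfl
  cases s
  · rcases L with _ | ⟨u, L⟩
    · rfl
    · have h1 := (reduced_cons_iff _ _ _).mp h |>.1
      cases u <;> first | rfl | (exact absurd h1 (by decide))
  · rfl
  · rfl

lemma rcons_b_b {L : List Letter} (h : Reduced L) :
    rcons Letter.b (rcons Letter.b L) = rcons Letter.b2 L := by
  rcases L with _ | ⟨s, L⟩
  · rfl
  cases s
  · rfl
  · rfl
  · rcases L with _ | ⟨u, L⟩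
    · rfl
    · have h1 := (reduced_cons_iff _ _ _).mp h |>.1
      cases u <;> first | rfl | (exact absurd h1 (by decide))

lemma rcons_b_b_b {L : List Letter} (h : Reduced L) :
    rcons Letter.b (rcons Letter.b (rcons Letter.b L)) = L := by
  rw [rcons_b_b (reduced_rcons h)]
  rcases L with _ | ⟨s, L⟩
  · rfl
  cases s
  · rfl
  · rfl
  · rcases L with _ | ⟨u, L⟩
    · rfl
    · have h1 := (reduced_cons_iff _ _ _).mp h |>.1
      cases u <;> first | rfl | (exact absurd h1 (by decide))

/-- reduced words -/
def RW : Type := {L : List Letter // Reduced L}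

def fW : Function.End RW := fun L => ⟨rcons Letter.w L.1, reduced_rcons L.2⟩
def fB : Function.End RW := fun L => ⟨rcons Letter.b L.1, reduced_rcons L.2⟩

lemma fW_sq : fW * fW = 1 := by
  funext L; exact Subtype.ext (rcons_w_w L.2)
lemma fB_cube : fB * fB * fB = 1 := by
  funext L; exact Subtype.ext (rcons_b_b_b L.2)

lemma pow_mod_cycle {M : Type*} [Monoid M] {x : M} {k : ℕ} (h : x ^ k = 1) (n : ℕ) :
    x ^ (n % k) = x ^ n := by
  conv_rhs => rw [← Nat.mod_add_div n k]
  rw [pow_add, pow_mul, h, one_pow, mul_one]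

def h2 : Multiplicative (ZMod 2) →* Function.End RW where
  toFun a := fW ^ (Multiplicative.toAdd a).val
  map_one' := by norm_num
  map_mul' a c := by
    show fW ^ (Multiplicative.toAdd a + Multiplicative.toAdd c).val = _
    rw [ZMod.val_add, pow_mod_cycle (by rw [pow_two]; exact fW_sq), pow_add]

def h3 : Multiplicative (ZMod 3) →* Function.End RW where
  toFun a := fB ^ (Multiplicative.toAdd a).val
  map_one' := by norm_num
  map_mul' a c := by
    show fB ^ (Multiplicative.toAdd a + Multiplicative.toAdd c).val = _
    rw [ZMod.val_add, pow_mod_cycle (by rw [pow_succ, pow_two]; exact fB_cube), pow_add]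

def Phi : G23 →* Function.End RW := Monoid.Coprod.lift h2 h3

def nilRW : RW := ⟨[], List.isChain_nil⟩

noncomputable def nf (g : G23) : List Letter := (Phi g nilRW).1

lemma Phi_w : Phi w = fW := by
  show Monoid.Coprod.lift h2 h3 (Monoid.Coprod.inl _) = fW
  rw [Monoid.Coprod.lift_apply_inl]
  show fW ^ (Multiplicative.toAdd (Multiplicative.ofAdd (1 : ZMod 2))).val = fW
  rw [show (Multiplicative.toAdd (Multiplicative.ofAdd (1 : ZMod 2))).val = 1 by decide, pow_one]
lemma Phi_b : Phi b = fB := by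
  show Monoid.Coprod.lift h2 h3 (Monoid.Coprod.inr _) = fB
  rw [Monoid.Coprod.lift_apply_inr]
  show fB ^ (Multiplicative.toAdd (Multiplicative.ofAdd (1 : ZMod 3))).val = fB
  rw [show (Multiplicative.toAdd (Multiplicative.ofAdd (1 : ZMod 3))).val = 1 by decide, pow_one]

lemma eval_act (g : G23) : ∀ M : RW, wordEval ((Phi g) M).1 = g * wordEval M.1 := by
  induction g using Monoid.Coprod.induction_on with
  | inl m =>
    intro M
    have hall : ∀ m : Multiplicative (ZMod 2), m = 1 ∨ m = Multiplicative.ofAdd 1 := by decide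
    rcases hall m with rfl | rfl
    · rw [map_one, map_one]; simp; rfl
    · rw [show Monoid.Coprod.inl (Multiplicative.ofAdd 1) = w from rfl, Phi_w]
      exact eval_rcons _ _
  | inr n =>
    intro M
    have hall : ∀ n : Multiplicative (ZMod 3), n = 1 ∨ n = Multiplicative.ofAdd 1 ∨ n = Multiplicative.ofAdd 1 * Multiplicative.ofAdd 1 := by decide
    rcases hall n with rfl | rfl | rfl
    · rw [map_one, map_one]; simp; rfl
    · rw [show Monoid.Coprod.inr (Multiplicative.ofAdd 1) = b from rfl, Phi_b]
      exact eval_rcons _ _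
    · rw [map_mul, map_mul, show Monoid.Coprod.inr (Multiplicative.ofAdd 1) = b from rfl, Phi_b]
      show wordEval ((fB) ((fB) M)).1 = _
      rw [show ((fB) ((fB) M)).1 = rcons Letter.b ((fB M).1) from rfl]
      rw [eval_rcons, show ((fB) M).1 = rcons Letter.b M.1 from rfl, eval_rcons]
      show b * (b * wordEval M.1) = b * b * wordEval M.1
      rw [mul_assoc]
  | mul x y ihx ihy =>
    intro M
    rw [map_mul]
    show wordEval ((Phi x) ((Phi y) M)).1 = _
    rw [ihx, ihy, mul_assoc]

lemma eval_nf (g : G23) : wordEval (nf g) = g := by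
  have := eval_act g nilRW
  exact this.trans (by rw [show wordEval nilRW.1 = 1 from rfl, mul_one])

lemma reduced_nf (g : G23) : Reduced (nf g) := (Phi g nilRW).2

lemma act_letter (t : Letter) (M : RW) : ((Phi t.eval) M).1 = rcons t M.1 := by
  cases t
  · rw [show Letter.w.eval = w from rfl, Phi_w]; rfl
  · rw [show Letter.b.eval = b from rfl, Phi_b]; rfl
  · show ((Phi (b ^ 2)) M).1 = _
    rw [pow_two, map_mul, Phi_b]
    show rcons Letter.b (rcons Letter.b M.1) = _
    exact rcons_b_b M.2

lemma nf_eval {L : List Letter} (h : Reduced L) : nf (wordEval L) = L := by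
  induction L with
  | nil => show (Phi 1 nilRW).1 = [] ; rw [map_one]; rfl
  | cons t L ih =>
    have hL : Reduced L := reduced_tail h
    rw [wordEval_cons]
    show ((Phi (t.eval * wordEval L)) nilRW).1 = _
    rw [map_mul]
    show ((Phi t.eval) ((Phi (wordEval L)) nilRW)).1 = _
    have : (Phi (wordEval L)) nilRW = ⟨L, hL⟩ := Subtype.ext (ih hL)
    rw [this]
    exact (act_letter t ⟨L, hL⟩).trans (rcons_eq_cons h)

lemma reduced_unique {L M : List Letter} (hL : Reduced L) (hM : Reduced M)
    (h : wordEval L = wordEval M) : L = M := by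
  rw [← nf_eval hL, ← nf_eval hM, h]

lemma len_nf (g : G23) : len g = (nf g).length := by
  have : {n : ℕ | ∃ L : List Letter, Reduced L ∧ wordEval L = g ∧ L.length = n} = {(nf g).length} := by
    ext n
    constructor
    · rintro ⟨L, hr, he, rfl⟩
      have : L = nf g := by rw [← nf_eval hr, he]
      rw [this]; rfl
    · rintro rfl
      exact ⟨nf g, reduced_nf g, eval_nf g, rfl⟩
  rw [len, this, csInf_singleton]

def invRev (L : List Letter) : List Letter := (L.map Letter.inv).reverse

lemma invRev_append (L M : List Letter) : invRev (L ++ M) = invRev M ++ invRev L := by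
  simp [invRev]

lemma invRev_cons (t : Letter) (L : List Letter) :
    invRev (t :: L) = invRev L ++ [t.inv] := by simp [invRev]

lemma letter_inv_inv (t : Letter) : t.inv.inv = t := by cases t <;> rfl

lemma invRev_invRev (L : List Letter) : invRev (invRev L) = L := by
  simp only [invRev, List.map_reverse, List.reverse_reverse, List.map_map]
  rw [show Letter.inv ∘ Letter.inv = id from funext letter_inv_inv, List.map_id]

lemma length_invRev (L : List Letter) : (invRev L).length = L.length := by simp [invRev]

lemma eval_letter_inv (t : Letter) : t.inv.eval = (t.eval)⁻¹ := by
  cases t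
  · exact eq_inv_of_mul_eq_one_left w_mul_w
  · exact eq_inv_of_mul_eq_one_left b2_mul_b
  · exact eq_inv_of_mul_eq_one_left b_mul_b2

lemma eval_invRev (L : List Letter) : wordEval (invRev L) = (wordEval L)⁻¹ := by
  induction L with
  | nil => simp [invRev, wordEval]
  | cons t L ih =>
    simp only [invRev_cons, wordEval_append, ih, wordEval_cons, wordEval_nil,
      eval_letter_inv, mul_one, mul_inv_rev]

lemma reduced_invRev {L : List Letter} (h : Reduced L) : Reduced (invRev L) := by
  rw [Reduced, invRev, List.Chain', List.isChain_reverse, List.isChain_map]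
  refine List.IsChain.imp ?_ h
  intro a c hac
  show (c.inv = Letter.w ↔ ¬ a.inv = Letter.w)
  revert hac
  cases a <;> cases c <;> decide

-- multiplication of words with reduction at the junction
def rmul (A B : List Letter) : List Letter := A.foldr rcons B

lemma rmul_nil (B : List Letter) : rmul [] B = B := rfl
lemma rmul_cons (t : Letter) (A B : List Letter) :
    rmul (t :: A) B = rcons t (rmul A B) := rfl
lemma rmul_concat (t : Letter) (A B : List Letter) :
    rmul (A ++ [t]) B = rmul A (rcons t B) := by
  simp [rmul, List.foldr_append]

lemma eval_rmul (A B : List Letter) : wordEval (rmul A B) = wordEval A * wordEval B := by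
  induction A with
  | nil => simp [rmul_nil, wordEval]
  | cons t A ih => rw [rmul_cons, eval_rcons, ih, wordEval_cons, mul_assoc]

lemma reduced_rmul {A B : List Letter} (h : Reduced B) : Reduced (rmul A B) := by
  induction A with
  | nil => exact h
  | cons t A ih => exact reduced_rcons ih

lemma nf_mul (x y : G23) : nf (x * y) = rmul (nf x) (nf y) := by
  have : wordEval (nf (x * y)) = wordEval (rmul (nf x) (nf y)) := by
    rw [eval_nf, eval_rmul, eval_nf, eval_nf]
  exact reduced_unique (reduced_nf _) (reduced_rmul (reduced_nf _)) this

lemma len_mul (x y : G23) : len (x * y) = (rmul (nf x) (nf y)).length := by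
  rw [len_nf, nf_mul]

lemma nf_letter_mul (t : Letter) (x : G23) : nf (t.eval * x) = rcons t (nf x) := by
  show ((Phi (t.eval * x)) nilRW).1 = _
  rw [map_mul]
  exact act_letter t _

lemma len_le (L : List Letter) : len (wordEval L) ≤ L.length := by
  induction L with
  | nil => rw [len_nf, show nf (wordEval []) = [] from nf_eval List.isChain_nil]
  | cons t L ih =>
    rw [wordEval_cons, len_nf, nf_letter_mul]
    have hr : (rcons t (nf (wordEval L))).length ≤ (nf (wordEval L)).length + 1 := by
      rcases nf (wordEval L) with _ | ⟨s, M⟩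
      · simp [rcons]
      · cases t <;> cases s <;> simp [rcons] <;> omega
    calc (rcons t (nf (wordEval L))).length ≤ (nf (wordEval L)).length + 1 := hr
      _ = len (wordEval L) + 1 := by rw [len_nf]
      _ ≤ L.length + 1 := by omega

lemma len_mul_le (x y : G23) : len (x * y) ≤ len x + len y := by
  have : x * y = wordEval (nf x ++ nf y) := by rw [wordEval_append, eval_nf, eval_nf]
  rw [this]
  calc len (wordEval (nf x ++ nf y)) ≤ (nf x ++ nf y).length := len_le _
    _ = len x + len y := by rw [List.length_append, len_nf, len_nf]

lemma len_inv (x : G23) : len x⁻¹ = len x := by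
  have key : ∀ z : G23, len z⁻¹ ≤ len z := by
    intro z
    have : z⁻¹ = wordEval (invRev (nf z)) := by rw [eval_invRev, eval_nf]
    rw [this]
    calc len (wordEval (invRev (nf z))) ≤ (invRev (nf z)).length := len_le _
      _ = len z := by rw [length_invRev, len_nf]
  have h1 := key x
  have h2 := key x⁻¹
  rw [inv_inv] at h2
  omega

lemma reduced_append_left {A B : List Letter} (h : Reduced (A ++ B)) : Reduced A :=
  (List.isChain_append.mp h).1
lemma reduced_append_right {A B : List Letter} (h : Reduced (A ++ B)) : Reduced B :=
  (List.isChain_append.mp h).2.1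

lemma reduced_glue {A B : List Letter} {t : Letter} (hA : Reduced (A ++ [t]))
    (hB : Reduced (t :: B)) : Reduced (A ++ t :: B) := by
  rw [Reduced, List.Chain', List.isChain_append]
  rw [Reduced, List.Chain', List.isChain_append] at hA
  refine ⟨hA.1, hB, ?_⟩
  intro x hx y hy
  simp only [List.head?_cons, Option.mem_def, Option.some.injEq] at hy
  subst hy
  exact hA.2.2 x hx t rfl

lemma reduced_cons_congr {s z : Letter} {B : List Letter} (hs : ¬ s = Letter.w)
    (hz : ¬ z = Letter.w) (h : Reduced (s :: B)) : Reduced (z :: B) := by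
  rw [Reduced, List.Chain', List.isChain_cons] at h ⊢
  refine ⟨?_, h.2⟩
  intro y hy
  have hxy := h.1 y hy
  have hy' : y = Letter.w := by
    by_contra hc
    exact hs (hxy.mpr hc)
  simp [hy', hz]

lemma reduced_snoc_congr {t z : Letter} {A : List Letter} (ht : ¬ t = Letter.w)
    (hz : ¬ z = Letter.w) (h : Reduced (A ++ [t])) : Reduced (A ++ [z]) := by
  rw [Reduced, List.Chain', List.isChain_append] at h ⊢
  refine ⟨h.1, List.isChain_singleton _, ?_⟩
  intro x hx y hy
  simp only [List.head?_cons, Option.mem_def, Option.some.injEq] at hy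
  subst hy
  have hxt := h.2.2 x hx t rfl
  have hx' : x = Letter.w := hxt.mpr ht
  simp [hx', hz]

lemma rmul_of_reduced {A B : List Letter} (h : Reduced (A ++ B)) : rmul A B = A ++ B := by
  induction A with
  | nil => rfl
  | cons t A ih =>
    have h' : Reduced (A ++ B) := reduced_tail h
    rw [rmul_cons, ih h']
    exact rcons_eq_cons (by simpa using h)

lemma len_cancel_bound {A U A₁ T U₁ : List Letter}
    (hA : A = A₁ ++ T) (hU : U = invRev T ++ U₁) :
    len (wordEval A * wordEval U) ≤ A₁.length + U₁.length := by
  subst hA hU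
  rw [wordEval_append, wordEval_append, eval_invRev]
  have : wordEval A₁ * wordEval T * ((wordEval T)⁻¹ * wordEval U₁)
      = wordEval (A₁ ++ U₁) := by
    rw [wordEval_append]; group
  rw [this]
  calc len (wordEval (A₁ ++ U₁)) ≤ (A₁ ++ U₁).length := len_le _
    _ = A₁.length + U₁.length := List.length_append

lemma cancel_extract {A B S A₀ B₀ : List Letter} (hA : A = A₀ ++ S)
    (hB : B = invRev S ++ B₀) {q : ℕ} (hq : q ≤ S.length) :
    ∃ T A₁ B₁, T.length = q ∧ A = A₁ ++ T ∧ B = invRev T ++ B₁ := by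
  refine ⟨S.drop (S.length - q), A₀ ++ S.take (S.length - q), invRev (S.take (S.length - q)) ++ B₀, ?_, ?_, ?_⟩
  · rw [List.length_drop]; omega
  · rw [hA, List.append_assoc, List.take_append_drop]
  · conv_lhs => rw [hB, ← List.take_append_drop (S.length - q) S, invRev_append]
    rw [List.append_assoc]

lemma rmul_structure (A : List Letter) : ∀ B : List Letter, Reduced A → Reduced B →
    ∃ S A₀ B₀, A = A₀ ++ S ∧ B = invRev S ++ B₀ ∧
      A.length + B.length ≤ (rmul A B).length + 2 * S.length + 1 := by
  induction A using List.reverseRecOn with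
  | nil =>
    intro B _ _
    exact ⟨[], [], B, rfl, rfl, by simp [rmul_nil]⟩
  | append_singleton A' t ih =>
    intro B hA hB
    have hA' : Reduced A' := reduced_append_left hA
    rcases B with _ | ⟨s, B'⟩
    · -- B empty : rcons t [] = [t]
      rw [rmul_concat]
      have : rmul A' (rcons t []) = A' ++ [t] := rmul_of_reduced (by exact hA)
      exact ⟨[], A' ++ [t], [], by simp, rfl, by simp [this]⟩
    · have hB' : Reduced B' := reduced_tail hB
      -- case split on the pair (t, s)
      rcases (show s = t.inv ∨ (t ≠ Letter.w ∧ s ≠ Letter.w ∧ s ≠ t.inv) ∨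
          (t = Letter.w ↔ ¬ s = Letter.w) from by cases t <;> cases s <;> simp [Letter.inv]) with
        hcan | ⟨ht, hs, hne⟩ | hcons
      · -- cancellation
        subst hcan
        have hstep : rcons t (t.inv :: B') = B' := by cases t <;> rfl
        obtain ⟨S', A₀, B₀, h1, h2, h3⟩ := ih B' hA' hB'
        refine ⟨S' ++ [t], A₀, B₀, ?_, ?_, ?_⟩
        · rw [← List.append_assoc, ← h1]
        · rw [invRev_append, show invRev [t] = [t.inv] from rfl, List.append_assoc,
            List.singleton_append, ← h2]
        · rw [rmul_concat, hstep]
          simp only [List.length_append, List.length_cons, List.length_singleton]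
          omega
      · -- merge
        have hz : ∃ z, rcons t (s :: B') = z :: B' ∧ z ≠ Letter.w := by
          cases t <;> cases s <;> first
            | (exact absurd rfl ht) | (exact absurd rfl hs) | (exact absurd rfl hne)
            | exact ⟨Letter.b, rfl, by decide⟩
            | exact ⟨Letter.b2, rfl, by decide⟩
        obtain ⟨z, hzeq, hzw⟩ := hz
        have hred : Reduced (A' ++ z :: B') := by
          refine reduced_glue (reduced_snoc_congr ht hzw hA) ?_
          exact reduced_cons_congr hs hzw hB
        rw [rmul_concat, hzeq, rmul_of_reduced hred]
        refine ⟨[], A' ++ [t], s :: B', by simp, rfl, ?_⟩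
        simp only [List.length_append, List.length_cons, List.length_singleton
          , List.length_nil]
        omega
      · -- no interaction
        have hstep : rcons t (s :: B') = t :: s :: B' := by
          cases t <;> cases s <;> first | rfl | (exact absurd hcons (by decide))
        have hred : Reduced (A' ++ t :: s :: B') := by
          refine reduced_glue hA ?_
          rw [reduced_cons_iff]
          exact ⟨hcons, hB⟩
        rw [rmul_concat, hstep, rmul_of_reduced hred]
        refine ⟨[], A' ++ [t], s :: B', ?_, rfl, ?_⟩
        · simp
        · simp only [List.length_append, List.length_cons, List.length_singleton,
            List.length_nil]
          omega

-- cancellation simp lemmas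
lemma w_inv : w⁻¹ = w := by
  rw [eq_comm, eq_inv_iff_mul_eq_one, w_mul_w]
lemma b_inv : b⁻¹ = b ^ 2 := by
  rw [eq_comm, eq_inv_iff_mul_eq_one, b2_mul_b]
lemma b2_inv : (b ^ 2)⁻¹ = b := by
  rw [eq_comm, eq_inv_iff_mul_eq_one, b_mul_b2]
lemma ww_cancel (x : G23) : w * (w * x) = x := by rw [← mul_assoc, w_mul_w, one_mul]
lemma bb2_cancel (x : G23) : b * (b ^ 2 * x) = x := by rw [← mul_assoc, b_mul_b2, one_mul]
lemma b2b_cancel (x : G23) : b ^ 2 * (b * x) = x := by rw [← mul_assoc, b2_mul_b, one_mul]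
lemma bb_merge (x : G23) : b * (b * x) = b ^ 2 * x := by rw [← mul_assoc, b_mul_b]
lemma b2b2_merge (x : G23) : b ^ 2 * (b ^ 2 * x) = b * x := by rw [← mul_assoc, b2_mul_b2]

def core : List Letter := [Letter.w, Letter.b, Letter.w, Letter.b, Letter.w]

def LongWord (L : List Letter) : Prop :=
  ∃ X : List Letter, Reduced X ∧ X.getLast? ≠ some Letter.w ∧ L = X ++ core ++ invRev X

def ConjWord (L : List Letter) : Prop :=
  L = [Letter.w, Letter.b2] ∨ L = [Letter.b, Letter.w, Letter.b] ∨
    L = [Letter.b2, Letter.w] ∨ LongWord L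

lemma head?_invRev (X : List Letter) : (invRev X).head? = X.getLast?.map Letter.inv := by
  induction X using List.reverseRecOn with
  | nil => rfl
  | append_singleton X x _ =>
    rw [invRev_append, show invRev [x] = [x.inv] from rfl]
    simp [List.getLast?_concat]

lemma reduced_core : Reduced core := by simp [Reduced, core, List.Chain']

lemma reduced_long {X : List Letter} (hX : Reduced X) (hlast : X.getLast? ≠ some Letter.w) :
    Reduced (X ++ core ++ invRev X) := by
  have h1 : Reduced (X ++ core) := by
    rw [Reduced, List.Chain', List.isChain_append]
    refine ⟨hX, reduced_core, ?_⟩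
    intro x hx y hy
    have hxw : ¬ x = Letter.w := by
      intro hxw; subst hxw; exact hlast hx
    simp only [core, List.head?_cons, Option.mem_def, Option.some.injEq] at hy
    subst hy
    simp [hxw]
  rw [Reduced, List.Chain', List.isChain_append]
  refine ⟨h1, reduced_invRev hX, ?_⟩
  intro x hx y hy
  have hxx : x = Letter.w := by
    rw [List.getLast?_append_of_ne_nil _ (by simp [core])] at hx
    have hwx : Letter.w = x := by simpa [core] using hx
    exact hwx.symm
  subst hxx
  rw [head?_invRev] at hy
  rcases hgl : X.getLast? with _ | z
  · rw [hgl] at hy; simp at hy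
  · rw [hgl] at hy
    simp only [Option.map_some, Option.mem_def, Option.some.injEq] at hy
    subst hy
    have hz : ¬ z = Letter.w := fun h => hlast (by rw [hgl, h])
    cases z <;> simp_all [Letter.inv]

def ec : G23 := wordEval core

lemma ec_eq : ec = w * s1 * w := by
  simp [ec, core, wordEval_cons, wordEval_nil, Letter.eval, s1, mul_assoc]

lemma long_eval (X : List Letter) :
    wordEval (X ++ core ++ invRev X) = wordEval X * ec * (wordEval X)⁻¹ := by
  rw [wordEval_append, wordEval_append, eval_invRev, ec]

lemma conj_conj (v u c : G23) : v * (u * c * u⁻¹) * v⁻¹ = (v * u) * c * (v * u)⁻¹ := by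
  group

lemma eval_w : Letter.w.eval = w := rfl
lemma eval_b : Letter.b.eval = b := rfl
lemma eval_b2 : Letter.b2.eval = b ^ 2 := rfl

lemma nf_det {x : G23} {M : List Letter} (hM : Reduced M) (he : x = wordEval M) :
    nf x = M := by rw [he, nf_eval hM]

lemma nf_s0 : nf s0 = [Letter.w, Letter.b2] :=
  nf_det (by simp [Reduced, List.Chain']) (by simp [s0, wordEval_cons, wordEval_nil, eval_w, eval_b2])
lemma nf_s1 : nf s1 = [Letter.b, Letter.w, Letter.b] :=
  nf_det (by simp [Reduced, List.Chain']) (by simp [s1, wordEval_cons, wordEval_nil, eval_w, eval_b, mul_assoc])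
lemma nf_s2 : nf s2 = [Letter.b2, Letter.w] :=
  nf_det (by simp [Reduced, List.Chain']) (by simp [s2, wordEval_cons, wordEval_nil, eval_w, eval_b2])

lemma shortSet_iff (g : G23) :
    g ∈ shortSet ↔ (nf g = [Letter.w, Letter.b2] ∨ nf g = [Letter.b, Letter.w, Letter.b] ∨
      nf g = [Letter.b2, Letter.w]) := by
  constructor
  · rintro (rfl | rfl | rfl)
    · exact Or.inl nf_s0
    · exact Or.inr (Or.inl nf_s1)
    · exact Or.inr (Or.inr nf_s2)
  · intro h
    have hg : g = wordEval (nf g) := (eval_nf g).symm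
    rcases h with h | h | h <;> rw [h] at hg
    · left; rw [hg, ← nf_s0, eval_nf]
    · right; left; rw [hg, ← nf_s1, eval_nf]
    · right; right; rw [hg, ← nf_s2, eval_nf]; rfl

lemma getLast?_cons_ne_nil {t : Letter} {X : List Letter} (h : X ≠ []) :
    (t :: X).getLast? = X.getLast? := by
  rcases X with _ | ⟨v, X⟩
  · exact absurd rfl h
  · exact List.getLast?_cons_cons

lemma conj_w (g : G23) (h : ConjWord (nf g)) : ConjWord (nf (w * g * w⁻¹)) := by
  have hg : g = wordEval (nf g) := (eval_nf g).symm
  rcases h with h | h | h | ⟨X, hXr, hXl, h⟩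
  · -- s0 ↦ s2
    rw [h] at hg
    right; right; left
    refine nf_det (by simp [Reduced, List.Chain']) ?_
    rw [hg]
    simp [wordEval_cons, wordEval_nil, eval_w, eval_b2, w_inv, mul_assoc, ww_cancel,
      w_mul_w, mul_one]
  · -- s1 ↦ core
    rw [h] at hg
    right; right; right
    refine ⟨[], List.isChain_nil, by simp, ?_⟩
    refine nf_det (by simpa [invRev] using reduced_core) ?_
    rw [hg]
    simp only [List.nil_append, List.append_nil, show invRev [] = [] from rfl]
    simp [wordEval_cons, wordEval_nil, eval_w, eval_b, core, w_inv, mul_assoc, mul_one]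
  · -- s2 ↦ s0
    rw [h] at hg
    left
    refine nf_det (by simp [Reduced, List.Chain']) ?_
    rw [hg]
    simp [wordEval_cons, wordEval_nil, eval_w, eval_b2, w_inv, mul_assoc, ww_cancel,
      w_mul_w, mul_one]
  · rw [h] at hg
    rw [hg, long_eval, conj_conj]
    rcases X with _ | ⟨s, X'⟩
    · -- core ↦ s1
      right; left
      refine nf_det (by simp [Reduced, List.Chain']) ?_
      rw [show wordEval [] = 1 from rfl, mul_one, ec_eq, w_inv]
      have : w * (w * s1 * w) * w = s1 := by
        simp [mul_assoc, ww_cancel, w_mul_w, mul_one]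
      rw [this]
      simp [s1, wordEval_cons, wordEval_nil, eval_w, eval_b, mul_assoc]
    · cases s
      · -- cancellation: X = w :: X'
        have hX' : X' ≠ [] := by
          rintro rfl
          exact hXl rfl
        have hcan : w * wordEval (Letter.w :: X') = wordEval X' := by
          rw [wordEval_cons, eval_w, ww_cancel]
        rw [hcan]
        right; right; right
        refine ⟨X', reduced_tail hXr, ?_, ?_⟩
        · rw [← getLast?_cons_ne_nil (t := Letter.w) hX']
          exact hXl
        · refine nf_det (reduced_long (reduced_tail hXr)
            (by rw [← getLast?_cons_ne_nil (t := Letter.w) hX']; exact hXl)) ?_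
          rw [long_eval]
      · -- prepend w to b :: X'
        right; right; right
        have hpre : w * wordEval (Letter.b :: X') = wordEval (Letter.w :: Letter.b :: X') := by
          rw [wordEval_cons (Letter.w), eval_w]
        rw [hpre]
        have hred : Reduced (Letter.w :: Letter.b :: X') := by
          rw [reduced_cons_iff]
          exact ⟨by simp, hXr⟩
        refine ⟨_, hred, ?_, nf_det (reduced_long hred ?_) (by rw [long_eval])⟩
        all_goals
          rw [List.getLast?_cons_cons]
          exact hXl
      · -- prepend w to b2 :: X'
        right; right; right
        have hpre : w * wordEval (Letter.b2 :: X') = wordEval (Letter.w :: Letter.b2 :: X') := by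
          rw [wordEval_cons (Letter.w), eval_w]
        rw [hpre]
        have hred : Reduced (Letter.w :: Letter.b2 :: X') := by
          rw [reduced_cons_iff]
          exact ⟨by simp, hXr⟩
        refine ⟨_, hred, ?_, nf_det (reduced_long hred ?_) (by rw [long_eval])⟩
        all_goals
          rw [List.getLast?_cons_cons]
          exact hXl

lemma conj_b (g : G23) (h : ConjWord (nf g)) : ConjWord (nf (b * g * b⁻¹)) := by
  have hg : g = wordEval (nf g) := (eval_nf g).symm
  rcases h with h | h | h | ⟨X, hXr, hXl, h⟩
  · -- s0 ↦ s1
    rw [h] at hg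
    right; left
    refine nf_det (by simp [Reduced, List.Chain']) ?_
    rw [hg]
    simp [wordEval_cons, wordEval_nil, eval_w, eval_b, eval_b2, b_inv, mul_assoc,
      bb2_cancel, b2b_cancel, bb_merge, b2b2_merge, b_mul_b2, b2_mul_b, b2_mul_b2,
      b_mul_b, mul_one]
  · -- s1 ↦ s2
    rw [h] at hg
    right; right; left
    refine nf_det (by simp [Reduced, List.Chain']) ?_
    rw [hg]
    simp [wordEval_cons, wordEval_nil, eval_w, eval_b, eval_b2, b_inv, mul_assoc,
      bb2_cancel, b2b_cancel, bb_merge, b2b2_merge, b_mul_b2, b2_mul_b, b2_mul_b2,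
      b_mul_b, mul_one]
  · -- s2 ↦ s0
    rw [h] at hg
    left
    refine nf_det (by simp [Reduced, List.Chain']) ?_
    rw [hg]
    simp [wordEval_cons, wordEval_nil, eval_w, eval_b, eval_b2, b_inv, mul_assoc,
      bb2_cancel, b2b_cancel, bb_merge, b2b2_merge, b_mul_b2, b2_mul_b, b2_mul_b2,
      b_mul_b, mul_one]
  · rw [h] at hg
    rw [hg, long_eval, conj_conj]
    right; right; right
    rcases X with _ | ⟨s, X'⟩
    · -- prepend b to empty
      have hone : b * wordEval [] = wordEval [Letter.b] := by
        simp [wordEval_cons, wordEval_nil, eval_b]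
      rw [hone]
      exact ⟨[Letter.b], by simp [Reduced, List.Chain'], by simp,
        nf_det (reduced_long (by simp [Reduced, List.Chain']) (by simp)) (by rw [long_eval])⟩
    · cases s
      · -- prepend b
        have hpre : b * wordEval (Letter.w :: X') = wordEval (Letter.b :: Letter.w :: X') := by
          rw [wordEval_cons (Letter.b), eval_b]
        rw [hpre]
        have hred : Reduced (Letter.b :: Letter.w :: X') := by
          rw [reduced_cons_iff]
          exact ⟨by simp, hXr⟩
        refine ⟨_, hred, ?_, nf_det (reduced_long hred ?_) (by rw [long_eval])⟩
        all_goals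
          rw [List.getLast?_cons_cons]
          exact hXl
      · -- merge : b :: X' ↦ b2 :: X'
        have hmer : b * wordEval (Letter.b :: X') = wordEval (Letter.b2 :: X') := by
          rw [wordEval_cons, wordEval_cons, eval_b, eval_b2, bb_merge]
        rw [hmer]
        have hred : Reduced (Letter.b2 :: X') := reduced_cons_congr (by simp) (by simp) hXr
        have hlast : (Letter.b2 :: X').getLast? ≠ some Letter.w := by
          rcases X' with _ | ⟨v, X''⟩
          · simp
          · rw [List.getLast?_cons_cons]
            rw [List.getLast?_cons_cons] at hXl
            exact hXl
        exact ⟨_, hred, hlast, nf_det (reduced_long hred hlast) (by rw [long_eval])⟩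
      · -- cancel : b2 :: X' ↦ X'
        have hcan : b * wordEval (Letter.b2 :: X') = wordEval X' := by
          rw [wordEval_cons, eval_b2, bb2_cancel]
        rw [hcan]
        have hred : Reduced X' := reduced_tail hXr
        have hlast : X'.getLast? ≠ some Letter.w := by
          rcases X' with _ | ⟨v, X''⟩
          · simp
          · rw [← List.getLast?_cons_cons (a := Letter.b2)]
            rw [← List.getLast?_cons_cons (a := Letter.b2)] at hXl
            exact hXl
        exact ⟨_, hred, hlast, nf_det (reduced_long hred hlast) (by rw [long_eval])⟩

lemma conj_letter (t : Letter) (g : G23) (h : ConjWord (nf g)) :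
    ConjWord (nf (t.eval * g * (t.eval)⁻¹)) := by
  cases t
  · exact conj_w g h
  · exact conj_b g h
  · have : Letter.b2.eval * g * (Letter.b2.eval)⁻¹ = b * (b * g * b⁻¹) * b⁻¹ := by
      rw [eval_b2]; simp [pow_two, mul_inv_rev, mul_assoc]
    rw [this]
    exact conj_b _ (conj_b _ h)

lemma conj_closure (L : List Letter) : ∀ g : G23, ConjWord (nf g) →
    ConjWord (nf (wordEval L * g * (wordEval L)⁻¹)) := by
  induction L with
  | nil => intro g h; simpa [wordEval_nil] using h
  | cons t L ih =>
    intro g h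
    rw [wordEval_cons, ← conj_conj]
    exact conj_letter _ _ (ih g h)

lemma conjWord_of_isConj {g : G23} (h : IsConj s1 g) : ConjWord (nf g) := by
  obtain ⟨c, hc⟩ := isConj_iff.mp h
  have hc' : c = wordEval (nf c) := (eval_nf c).symm
  rw [← hc, hc']
  exact conj_closure _ s1 (Or.inr (Or.inl nf_s1))

-- the reversal anti-automorphism
def opHom2 : Multiplicative (ZMod 2) →* G23ᵐᵒᵖ where
  toFun a := MulOpposite.op (Monoid.Coprod.inl a)
  map_one' := by simp
  map_mul' a c := by
    show MulOpposite.op (Monoid.Coprod.inl (a * c)) = _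
    rw [mul_comm a c, map_mul, MulOpposite.op_mul]

def opHom3 : Multiplicative (ZMod 3) →* G23ᵐᵒᵖ where
  toFun a := MulOpposite.op (Monoid.Coprod.inr a)
  map_one' := by simp
  map_mul' a c := by
    show MulOpposite.op (Monoid.Coprod.inr (a * c)) = _
    rw [mul_comm a c, map_mul, MulOpposite.op_mul]

def rhoHom : G23 →* G23ᵐᵒᵖ := Monoid.Coprod.lift opHom2 opHom3

def rho (g : G23) : G23 := MulOpposite.unop (rhoHom g)

lemma rho_mul (x y : G23) : rho (x * y) = rho y * rho x := by
  unfold rho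
  rw [map_mul]
  rfl

lemma rho_one : rho 1 = 1 := by unfold rho; rw [map_one]; rfl

lemma rho_w : rho w = w := by
  unfold rho w
  rw [show rhoHom (Monoid.Coprod.inl (Multiplicative.ofAdd (1 : ZMod 2)))
    = opHom2 (Multiplicative.ofAdd (1 : ZMod 2)) from Monoid.Coprod.lift_apply_inl _ _ _]
  rfl

lemma rho_b : rho b = b := by
  unfold rho b
  rw [show rhoHom (Monoid.Coprod.inr (Multiplicative.ofAdd (1 : ZMod 3)))
    = opHom3 (Multiplicative.ofAdd (1 : ZMod 3)) from Monoid.Coprod.lift_apply_inr _ _ _]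
  rfl

lemma rho_letter (t : Letter) : rho t.eval = t.eval := by
  cases t
  · exact rho_w
  · exact rho_b
  · rw [eval_b2, pow_two, rho_mul, rho_b]

lemma rho_eval (L : List Letter) : rho (wordEval L) = wordEval L.reverse := by
  induction L with
  | nil => exact rho_one
  | cons t L ih =>
    rw [wordEval_cons, rho_mul, ih, rho_letter, List.reverse_cons, wordEval_append,
      wordEval_cons, wordEval_nil, mul_one]

lemma reduced_reverse {L : List Letter} (h : Reduced L) : Reduced L.reverse := by
  rw [Reduced, List.Chain', List.isChain_reverse]
  refine List.IsChain.imp ?_ h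
  intro a c hac
  show (c = Letter.w ↔ ¬ a = Letter.w)
  revert hac
  cases a <;> cases c <;> decide

lemma nf_rho (g : G23) : nf (rho g) = (nf g).reverse := by
  refine nf_det (reduced_reverse (reduced_nf g)) ?_
  rw [← rho_eval, eval_nf]

lemma len_rho (g : G23) : len (rho g) = len g := by
  rw [len_nf, len_nf, nf_rho, List.length_reverse]

lemma rho_inv (x : G23) : rho x⁻¹ = (rho x)⁻¹ := by
  have h1 : rho x⁻¹ * rho x = 1 := by
    rw [← rho_mul, mul_inv_cancel, rho_one]
  exact eq_inv_of_mul_eq_one_left h1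

lemma rho_rho (g : G23) : rho (rho g) = g := by
  conv_lhs => rw [← eval_nf g]
  rw [rho_eval, rho_eval, List.reverse_reverse, eval_nf]

lemma rho_s1 : rho s1 = s1 := by
  rw [s1, rho_mul, rho_mul, rho_b, rho_w, mul_assoc]
lemma rho_s0 : rho s0 = s2 := by
  rw [s0, rho_mul, rho_w, s2, pow_two, rho_mul, rho_b, ← pow_two]
lemma rho_s2 : rho s2 = s0 := by
  rw [← rho_s0, rho_rho]

lemma rho_isConj {g : G23} (h : IsConj s1 g) : IsConj s1 (rho g) := by
  obtain ⟨c, hc⟩ := isConj_iff.mp h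
  refine isConj_iff.mpr ⟨(rho c)⁻¹, ?_⟩
  rw [← hc, rho_mul, rho_mul, rho_inv, rho_s1, inv_inv]
  group

lemma rho_shortSet {g : G23} (h : g ∉ shortSet) : rho g ∉ shortSet := by
  intro hc
  apply h
  rcases hc with h1 | h1 | h1
  · -- rho g = s0, g = rho s0 = s2
    have : g = s2 := by rw [← rho_rho g, h1, rho_s0]
    right; right; rw [this]; rfl
  · have : g = s1 := by rw [← rho_rho g, h1, rho_s1]
    right; left; rw [this]
  · have : g = s0 := by rw [← rho_rho g, h1, rho_s2]
    left; rw [this]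

lemma extract_suffix {A A₁ T : List Letter} (h : A = A₁ ++ T) : T = A.drop A₁.length := by
  rw [h, List.drop_left]

lemma len_s1 : len s1 = 3 := by rw [len_nf, nf_s1]; rfl

lemma core_lemma (g h : G23) (hgc : IsConj s1 g) (hhc : IsConj s1 h)
    (hlong : g ∉ shortSet ∨ h ∉ shortSet)
    (hgh : len g < len h) (hlt : len (g * h) < len h) :
    len (g * h * g⁻¹) < len h := by
  classical
  -- h is long
  obtain ⟨Y, hYr, hYl, hBY⟩ : LongWord (nf h) := by
    rcases conjWord_of_isConj hhc with hB | hB | hB | hB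
    rotate_right
    · exact hB
    all_goals
    · have hhs : h ∈ shortSet := (shortSet_iff h).mpr (by tauto)
      have hlen3 : len h ≤ 3 := by rw [len_nf, hB]; simp
      rcases hlong with hgns | hhns
      · rcases conjWord_of_isConj hgc with hAg | hAg | hAg | ⟨X, _, _, hAg⟩
        · exact absurd ((shortSet_iff g).mpr (by tauto)) hgns
        · exact absurd ((shortSet_iff g).mpr (by tauto)) hgns
        · exact absurd ((shortSet_iff g).mpr (by tauto)) hgns
        · have : len g = 2 * X.length + 5 := by
            rw [len_nf, hAg]
            simp [core, length_invRev, List.length_append]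
            omega
          omega
      · exact absurd hhs hhns
  have hlenh : len h = 2 * Y.length + 5 := by
    rw [len_nf, hBY]
    simp [core, length_invRev, List.length_append]
    omega
  have hUred : True := trivial
  have hhuid : h = wordEval (Y ++ [Letter.w]) * s1 * (wordEval (Y ++ [Letter.w]))⁻¹ := by
    conv_lhs => rw [← eval_nf h, hBY]
    rw [long_eval, ec_eq, wordEval_append,
      show wordEval [Letter.w] = w by simp [wordEval_cons, wordEval_nil, eval_w]]
    have hid : ∀ A C : G23, A * (w * C * w) * A⁻¹ = (A * w) * C * (A * w)⁻¹ := by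
      intro A C
      rw [mul_inv_rev, w_inv]
      group
    rw [hid]
  have hconj : g * h * g⁻¹ = (g * wordEval (Y ++ [Letter.w])) * s1 *
      (g * wordEval (Y ++ [Letter.w]))⁻¹ := by
    conv_lhs => rw [hhuid]
    group
  have hfinal : ∀ m : ℕ, len (g * wordEval (Y ++ [Letter.w])) ≤ m →
      len (g * h * g⁻¹) ≤ 2 * m + 3 := by
    intro m hm
    rw [hconj]
    set v := g * wordEval (Y ++ [Letter.w]) with hv
    have h1 : len (v * s1 * v⁻¹) ≤ len (v * s1) + len v⁻¹ := len_mul_le _ _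
    have h2 : len (v * s1) ≤ len v + len s1 := len_mul_le _ _
    rw [len_inv] at h1
    rw [len_s1] at h2
    omega
  have hA : g = wordEval (nf g) := (eval_nf g).symm
  obtain ⟨S, A₀, B₀, hSA, hSB, hineq⟩ :=
    rmul_structure (nf g) (nf h) (reduced_nf g) (reduced_nf h)
  have hS2 : (nf g).length ≤ 2 * S.length := by
    have h2 : (rmul (nf g) (nf h)).length < (nf h).length := by
      rw [← len_mul g h, ← len_nf]
      exact hlt
    omega
  rcases conjWord_of_isConj hgc with hAg | hAg | hAg | ⟨X, hXr, hXl, hAg⟩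
  · -- g = wb2
    have hq : 1 ≤ S.length := by rw [hAg] at hS2; simp at hS2; omega
    obtain ⟨T, A₁, B₁, hTl, hAT, hBT⟩ := cancel_extract hSA hSB hq
    have hA₁ : A₁.length = 1 := by
      have := congrArg List.length hAT
      rw [hAg] at this
      simp [hTl] at this
      omega
    have hT : T = [Letter.b2] := by
      have h5 := extract_suffix hAT
      rw [hA₁, hAg] at h5
      exact h5
    rw [hT] at hBT
    have hBT' : nf h = Letter.b :: B₁ := by rw [hBT]; rfl
    rcases Y with _ | ⟨y0, Y'⟩
    · rw [hBY] at hBT'; simp [core] at hBT'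
    · have hy0 : y0 = Letter.b := by
        rw [hBY] at hBT'
        have h6 := congrArg List.head? hBT'
        simpa using h6
      subst hy0
      rcases Y' with _ | ⟨v, Y''⟩
      · -- Y = [b]
        have hbound : len (g * wordEval (Letter.b :: [] ++ [Letter.w])) ≤ 0 + 0 := by
          rw [hA]
          refine len_cancel_bound (A₁ := []) (T := [Letter.w, Letter.b2]) (U₁ := []) ?_ ?_
          · rw [hAg]; rfl
          · rfl
        have := hfinal 0 (by simpa using hbound)
        simp only [List.length_cons, List.length_nil] at hlenh
        omega
      · have hv : v = Letter.w := by
          have hrel := (reduced_cons_iff _ _ _).mp hYr |>.1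
          cases v
          · rfl
          · exact absurd hrel (by decide)
          · exact absurd hrel (by decide)
        subst hv
        have hbound : len (g * wordEval (Letter.b :: Letter.w :: Y'' ++ [Letter.w])) ≤
            0 + (Y'' ++ [Letter.w]).length := by
          rw [hA]
          refine len_cancel_bound (A₁ := []) (T := [Letter.w, Letter.b2])
            (U₁ := Y'' ++ [Letter.w]) ?_ ?_
          · rw [hAg]; rfl
          · rfl
        have := hfinal _ hbound
        simp only [List.length_append, List.length_cons, List.length_nil] at this hlenh
        omega
  · -- g = bwb
    have hq : 2 ≤ S.length := by rw [hAg] at hS2; simp at hS2; omega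
    obtain ⟨T, A₁, B₁, hTl, hAT, hBT⟩ := cancel_extract hSA hSB hq
    have hA₁ : A₁.length = 1 := by
      have := congrArg List.length hAT
      rw [hAg] at this
      simp [hTl] at this
      omega
    have hT : T = [Letter.w, Letter.b] := by
      have h5 := extract_suffix hAT
      rw [hA₁, hAg] at h5
      exact h5
    rw [hT] at hBT
    have hBT' : nf h = Letter.b2 :: Letter.w :: B₁ := by rw [hBT]; rfl
    have hA₁' : A₁ = [Letter.b] := by
      have h5 : nf g = A₁ ++ T := hAT
      rw [hAg, hT] at h5
      rcases A₁ with _ | ⟨a, A'⟩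
      · simp at hA₁
      · rcases A' with _ | _
        · simpa using h5.symm
        · simp at hA₁
    rcases Y with _ | ⟨y0, Y'⟩
    · rw [hBY] at hBT'; simp [core] at hBT'
    · have hy0 : y0 = Letter.b2 := by
        rw [hBY] at hBT'
        have h6 := congrArg List.head? hBT'
        simpa using h6
      subst hy0
      rcases Y' with _ | ⟨v, Y''⟩
      · -- Y = [b2], U = [b2, w]
        have hbound : len (g * wordEval (Letter.b2 :: [] ++ [Letter.w])) ≤ 1 + 0 := by
          rw [hA]
          refine len_cancel_bound (A₁ := [Letter.b]) (T := [Letter.w, Letter.b]) (U₁ := []) ?_ ?_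
          · rw [hAg]; rfl
          · rfl
        have := hfinal 1 (by simpa using hbound)
        simp only [List.length_cons, List.length_nil] at hlenh
        omega
      · have hv : v = Letter.w := by
          rw [hBY] at hBT'
          have h6 := congrArg (fun l => l.drop 1 |>.head?) hBT'
          simpa using h6
        subst hv
        have hbound : len (g * wordEval (Letter.b2 :: Letter.w :: Y'' ++ [Letter.w])) ≤
            1 + (Y'' ++ [Letter.w]).length := by
          rw [hA]
          refine len_cancel_bound (A₁ := [Letter.b]) (T := [Letter.w, Letter.b])
            (U₁ := Y'' ++ [Letter.w]) ?_ ?_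
          · rw [hAg]; rfl
          · rfl
        have := hfinal _ hbound
        simp only [List.length_append, List.length_cons, List.length_nil] at this hlenh
        omega
  · -- g = b2w
    have hq : 1 ≤ S.length := by rw [hAg] at hS2; simp at hS2; omega
    obtain ⟨T, A₁, B₁, hTl, hAT, hBT⟩ := cancel_extract hSA hSB hq
    have hA₁ : A₁.length = 1 := by
      have := congrArg List.length hAT
      rw [hAg] at this
      simp [hTl] at this
      omega
    have hT : T = [Letter.w] := by
      have h5 := extract_suffix hAT
      rw [hA₁, hAg] at h5
      exact h5
    rw [hT] at hBT
    have hBT' : nf h = Letter.w :: B₁ := by rw [hBT]; rfl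
    rcases Y with _ | ⟨y0, Y'⟩
    · -- special case: h = eval core, g = s2-word
      have hcore : nf h = core := by rw [hBY]; rfl
      have heq : g * h * g⁻¹ = wordEval [Letter.w, Letter.b2] := by
        rw [hA, ← eval_nf h, hAg, hcore]
        simp [wordEval_cons, wordEval_nil, core, eval_w, eval_b, eval_b2,
          mul_inv_rev, w_inv, b2_inv, mul_assoc, ww_cancel, bb2_cancel, b2b_cancel,
          bb_merge, b2b2_merge, w_mul_w, b_mul_b2, b2_mul_b, b2_mul_b2, b_mul_b, mul_one]
      rw [heq]
      have : len (wordEval [Letter.w, Letter.b2]) ≤ 2 := len_le _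
      omega
    · have hy0 : y0 = Letter.w := by
        rw [hBY] at hBT'
        have h6 := congrArg List.head? hBT'
        simpa using h6
      subst hy0
      rcases Y' with _ | ⟨v, Y''⟩
      · -- Y = [w] contradicts hYl
        exact absurd rfl hYl
      · have hv : ¬ v = Letter.w := by
          have hrel := (reduced_cons_iff _ _ _).mp hYr |>.1
          intro hvw
          rw [hvw] at hrel
          exact absurd hrel (by decide)
        cases v
        · exact absurd rfl hv
        · -- Y = w :: b :: Y''
          have hbound : len (g * wordEval (Letter.w :: Letter.b :: Y'' ++ [Letter.w])) ≤
              0 + (Y'' ++ [Letter.w]).length := by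
            rw [hA]
            refine len_cancel_bound (A₁ := []) (T := [Letter.b2, Letter.w])
              (U₁ := Y'' ++ [Letter.w]) ?_ ?_
            · rw [hAg]; rfl
            · rfl
          have := hfinal _ hbound
          simp only [List.length_append, List.length_cons, List.length_nil] at this hlenh
          omega
        · -- Y = w :: b2 :: Y'' : merge
          have hmeq : g * wordEval (Letter.w :: Letter.b2 :: Y'' ++ [Letter.w]) =
              wordEval (Letter.b :: (Y'' ++ [Letter.w])) := by
            rw [hA, hAg]
            simp [wordEval_cons, eval_w, eval_b, eval_b2, mul_assoc, ww_cancel,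
              b2b2_merge, wordEval_nil, mul_one]
          have hb2 : len (g * wordEval (Letter.w :: Letter.b2 :: Y'' ++ [Letter.w])) ≤
              (Letter.b :: (Y'' ++ [Letter.w])).length := by
            rw [hmeq]
            exact len_le _
          have := hfinal _ hb2
          simp only [List.length_append, List.length_cons, List.length_nil] at this hlenh
          omega
  · -- g long
    have hjk : X.length < Y.length := by
      have hlg : len g = 2 * X.length + 5 := by
        rw [len_nf, hAg]
        simp [core, length_invRev, List.length_append]
        omega
      omega
    have hq : X.length + 3 ≤ S.length := by
      rw [hAg] at hS2
      simp only [List.length_append, length_invRev, core, List.length_cons,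
        List.length_nil] at hS2
      omega
    obtain ⟨T, A₁, B₁, hTl, hAT, hBT⟩ := cancel_extract hSA hSB hq
    have hA₁ : A₁.length = X.length + 2 := by
      have := congrArg List.length hAT
      rw [hAg] at this
      simp only [List.length_append, length_invRev, core, List.length_cons,
        List.length_nil, hTl] at this
      omega
    have hT : T = [Letter.w, Letter.b, Letter.w] ++ invRev X := by
      have h5 := extract_suffix hAT
      rw [hA₁, hAg] at h5
      rw [h5, show X ++ core ++ invRev X =
        (X ++ [Letter.w, Letter.b]) ++ ([Letter.w, Letter.b, Letter.w] ++ invRev X) by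
          simp [core]]
      rw [List.drop_left' (by simp)]
    have hinvT : invRev T = X ++ [Letter.w, Letter.b2, Letter.w] := by
      rw [hT, invRev_append, invRev_invRev]
      rfl
    have hcomp : (X ++ [Letter.w, Letter.b2, Letter.w]) ++ B₁ =
        (Y ++ [Letter.w, Letter.b, Letter.w]) ++ ([Letter.b, Letter.w] ++ invRev Y) := by
      rw [← hinvT, ← hBT, hBY]
      simp [core]
    have hpref : X ++ [Letter.w, Letter.b2, Letter.w] =
        (Y ++ [Letter.w, Letter.b, Letter.w]).take (X.length + 3) := by
      have htake := congrArg (List.take (X.length + 3)) hcomp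
      rwa [List.take_left' (by simp), List.take_append_of_le_length (by simp; omega)] at htake
    rcases (show Y.length = X.length + 1 ∨ Y.length = X.length + 2 ∨
        X.length + 3 ≤ Y.length by omega) with hk | hk | hk
    · -- k = j + 1 : contradiction
      rw [show X.length + 3 = Y.length + 2 by omega, List.take_append] at hpref
      have := congrArg List.reverse hpref
      simp [List.reverse_append] at this
    · -- k = j + 2 : full cancellation of U
      rw [show X.length + 3 = Y.length + 1 by omega, List.take_append] at hpref
      have hbound : len (g * wordEval (Y ++ [Letter.w])) ≤ A₁.length + 0 := by
        rw [hA]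
        refine len_cancel_bound (A₁ := A₁) (T := T) (U₁ := []) hAT ?_
        rw [hinvT, hpref]
        simp
      have := hfinal (A₁.length + 0) hbound
      omega
    · -- k ≥ j + 3
      rw [List.take_append_of_le_length (by omega)] at hpref
      have hbound : len (g * wordEval (Y ++ [Letter.w])) ≤
          A₁.length + (Y.drop (X.length + 3) ++ [Letter.w]).length := by
        rw [hA]
        refine len_cancel_bound (A₁ := A₁) (T := T)
          (U₁ := Y.drop (X.length + 3) ++ [Letter.w]) hAT ?_
        rw [hinvT, hpref]
        conv_lhs => rw [← List.take_append_drop (X.length + 3) Y]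
        rw [List.append_assoc]
      have hb2 : len (g * wordEval (Y ++ [Letter.w])) ≤ Y.length := by
        simp only [List.length_append, List.length_drop, List.length_cons,
          List.length_nil] at hbound
        omega
      have := hfinal Y.length hb2
      omega

lemma neq_lemma (g h : G23) (hgc : IsConj s1 g) (hhc : IsConj s1 h)
    (hlong : g ∉ shortSet ∨ h ∉ shortSet)
    (hlt : len (g * h) < max (len g) (len h)) : len g ≠ len h := by
  intro he
  rw [he, max_self] at hlt
  have hshortlen : ∀ x : G23, x ∈ shortSet → len x ≤ 3 := by
    rintro x (rfl | rfl | rfl)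
    · rw [len_nf, nf_s0]; simp
    · rw [len_nf, nf_s1]; simp
    · rw [len_nf, nf_s2]; simp
  obtain ⟨X, hXr, hXl, hAg⟩ : LongWord (nf g) := by
    rcases conjWord_of_isConj hgc with hA | hA | hA | hA
    rotate_right
    · exact hA
    all_goals
    · exfalso
      have hgs : g ∈ shortSet := (shortSet_iff g).mpr (by tauto)
      rcases conjWord_of_isConj hhc with hB | hB | hB | ⟨Y, _, _, hB⟩
      · have hhs : h ∈ shortSet := (shortSet_iff h).mpr (by tauto)
        rcases hlong with h1 | h1
        exacts [h1 hgs, h1 hhs]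
      · have hhs : h ∈ shortSet := (shortSet_iff h).mpr (by tauto)
        rcases hlong with h1 | h1
        exacts [h1 hgs, h1 hhs]
      · have hhs : h ∈ shortSet := (shortSet_iff h).mpr (by tauto)
        rcases hlong with h1 | h1
        exacts [h1 hgs, h1 hhs]
      · -- g short, h long : lengths differ
        have h1 : len g ≤ 3 := hshortlen g hgs
        have h2 : len h = 2 * Y.length + 5 := by
          rw [len_nf, hB]
          simp [core, length_invRev, List.length_append]
          omega
        omega
  obtain ⟨Y, hYr, hYl, hBh⟩ : LongWord (nf h) := by
    rcases conjWord_of_isConj hhc with hB | hB | hB | hB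
    rotate_right
    · exact hB
    all_goals
    · exfalso
      have hhs : h ∈ shortSet := (shortSet_iff h).mpr (by tauto)
      have h1 : len h ≤ 3 := hshortlen h hhs
      have h2 : len g = 2 * X.length + 5 := by
        rw [len_nf, hAg]
        simp [core, length_invRev, List.length_append]
        omega
      omega
  have hlg : len g = 2 * X.length + 5 := by
    rw [len_nf, hAg]; simp [core, length_invRev, List.length_append]; omega
  have hlh : len h = 2 * Y.length + 5 := by
    rw [len_nf, hBh]; simp [core, length_invRev, List.length_append]; omega
  have hXY : X.length = Y.length := by omega
  obtain ⟨S, A₀, B₀, hSA, hSB, hineq⟩ :=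
    rmul_structure (nf g) (nf h) (reduced_nf g) (reduced_nf h)
  have hS2 : (nf g).length ≤ 2 * S.length := by
    have h2 : (rmul (nf g) (nf h)).length < (nf h).length := by
      rw [← len_mul g h, ← len_nf]
      omega
    omega
  have hq : X.length + 3 ≤ S.length := by
    rw [hAg] at hS2
    simp only [List.length_append, length_invRev, core, List.length_cons,
      List.length_nil] at hS2
    omega
  obtain ⟨T, A₁, B₁, hTl, hAT, hBT⟩ := cancel_extract hSA hSB hq
  have hA₁ : A₁.length = X.length + 2 := by
    have := congrArg List.length hAT
    rw [hAg] at this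
    simp only [List.length_append, length_invRev, core, List.length_cons,
      List.length_nil, hTl] at this
    omega
  have hT : T = [Letter.w, Letter.b, Letter.w] ++ invRev X := by
    have h5 := extract_suffix hAT
    rw [hA₁, hAg] at h5
    rw [h5, show X ++ core ++ invRev X =
      (X ++ [Letter.w, Letter.b]) ++ ([Letter.w, Letter.b, Letter.w] ++ invRev X) by
        simp [core]]
    rw [List.drop_left' (by simp)]
  have hinvT : invRev T = X ++ [Letter.w, Letter.b2, Letter.w] := by
    rw [hT, invRev_append, invRev_invRev]
    rfl
  have hcomp : (X ++ [Letter.w, Letter.b2, Letter.w]) ++ B₁ =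
      (Y ++ [Letter.w, Letter.b, Letter.w]) ++ ([Letter.b, Letter.w] ++ invRev Y) := by
    rw [← hinvT, ← hBT, hBh]
    simp [core]
  have htake := congrArg (List.take (X.length + 3)) hcomp
  rw [List.take_left' (by simp), List.take_left' (by simp [hXY])] at htake
  have := congrArg List.reverse htake
  simp [List.reverse_append] at this


/-- **Lemma (Friedman–Morgan 4.15).**  If `g, h` are conjugates of `s₁` with
`l(gh) < max(l(g), l(h))` and at least one of them long, then `l(g) ≠ l(h)`; if
`l(g) < l(h)` then `g' = ghg⁻¹`, `h' = g` are conjugates of `s₁` with `g'h' = gh` and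
`l(g') + l(h') < l(g) + l(h)`; if `l(h) < l(g)` the same holds for `g' = h`,
`h' = h⁻¹gh`. -/
theorem not_join_well_lemma (g h : G23) (hg : IsConj s1 g) (hh : IsConj s1 h)
    (hlong : g ∉ shortSet ∨ h ∉ shortSet)
    (hlt : len (g * h) < max (len g) (len h)) :
    len g ≠ len h ∧
    (len g < len h →
      IsConj s1 (g * h * g⁻¹) ∧ IsConj s1 g ∧
      (g * h * g⁻¹) * g = g * h ∧
      len (g * h * g⁻¹) + len g < len g + len h) ∧
    (len h < len g →
      IsConj s1 h ∧ IsConj s1 (h⁻¹ * g * h) ∧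
      h * (h⁻¹ * g * h) = g * h ∧
      len h + len (h⁻¹ * g * h) < len g + len h) := by
  refine ⟨neq_lemma g h hg hh hlong hlt, ?_, ?_⟩
  · intro h2
    have hlt' : len (g * h) < len h := by
      rwa [max_eq_right (le_of_lt h2)] at hlt
    refine ⟨hh.trans (isConj_iff.mpr ⟨g, rfl⟩), hg, by group, ?_⟩
    have := core_lemma g h hg hh hlong h2 hlt'
    omega
  · intro h2
    have hlt' : len (g * h) < len g := by
      rwa [max_eq_left (le_of_lt h2)] at hlt
    have hc1 : IsConj s1 (rho h) := rho_isConj hh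
    have hc2 : IsConj s1 (rho g) := rho_isConj hg
    have hlong' : rho h ∉ shortSet ∨ rho g ∉ shortSet := by
      rcases hlong with h1 | h1
      · exact Or.inr (rho_shortSet h1)
      · exact Or.inl (rho_shortSet h1)
    have hgh' : len (rho h) < len (rho g) := by
      rw [len_rho, len_rho]
      exact h2
    have hmul : rho h * rho g = rho (g * h) := (rho_mul g h).symm
    have hlt'' : len (rho h * rho g) < len (rho g) := by
      rw [hmul, len_rho, len_rho]
      exact hlt'
    have hcore := core_lemma (rho h) (rho g) hc1 hc2 hlong' hgh' hlt''
    have hrr : rho h * rho g * (rho h)⁻¹ = rho (h⁻¹ * g * h) := by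
      rw [show h⁻¹ * g * h = h⁻¹ * (g * h) by group, rho_mul, rho_mul, rho_inv]
    rw [hrr, len_rho, len_rho] at hcore
    refine ⟨hh, hg.trans (isConj_iff.mpr ⟨h⁻¹, by group⟩), by group, ?_⟩
    omega
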